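/- Let A, B ⊆ ℝ^d be finite sets with |B| = d+1, such that the d-th coordinate of every point of A is strictly less than the d-th coordinate of every point of B, and A ∪ B is in general (affine) position. For any labels y_b ∈ ℝ for b ∈ B, there exist w_1, w_2 ∈ ℝ^{d+1} such that w_1ᵀā ≤ 0, w_2ᵀā ≤ 0 for all a ∈ A and w_1ᵀb̄ ≥ 0, w_2ᵀb̄ ≥ 0 for all b ∈ B, and the function f(x) = max(w_1ᵀx̄, 0) − max(w_2ᵀx̄, 0) satisfies f(a) = 0 for all a ∈ A and f(b) = y_b for all b ∈ B. -/

import Mathlib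

/-- Homogeneous coordinates: append a final coordinate equal to `1`. -/
def bar {d : ℕ} (x : Fin d → ℝ) : Fin (d + 1) → ℝ := Fin.snoc x 1

lemma snoc_dot {d : ℕ} (u x : Fin d → ℝ) (r : ℝ) :
    (∑ j, (Fin.snoc u r : Fin (d+1) → ℝ) j * bar x j) = (∑ k, u k * x k) + r := by
  rw [Fin.sum_univ_castSucc]
  simp [bar, Fin.snoc_castSucc, Fin.snoc_last]

lemma single_dot {d : ℕ} (i : Fin d) (x : Fin d → ℝ) :
    (∑ k, (Pi.single i 1 : Fin d → ℝ) k * x k) = x i := by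
  simp [Pi.single_apply, Finset.sum_ite_eq]

lemma lin_dot {d : ℕ} (φ : (Fin (d+1) → ℝ) →ₗ[ℝ] ℝ) (v : Fin (d+1) → ℝ) :
    (∑ j, φ (Pi.single j 1) * v j) = φ v := by
  have hv : v = ∑ j, v j • (Pi.single j 1 : Fin (d+1) → ℝ) := by
    funext k
    simp [Finset.sum_apply, Pi.single_apply]
  conv_rhs => rw [hv]
  rw [map_sum]
  simp [mul_comm]

theorem stmt11 {d : ℕ} (hd : 0 < d) (A B : Finset (Fin d → ℝ))
    (hB : B.card = d + 1)
    (hsep : ∀ a ∈ A, ∀ b ∈ B, a ⟨d - 1, by omega⟩ < b ⟨d - 1, by omega⟩)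
    (hgen : ∀ s : Finset (Fin d → ℝ), ↑s ⊆ (↑A ∪ ↑B : Set (Fin d → ℝ)) → s.card ≤ d + 1 →
      AffineIndependent ℝ ((↑) : s → (Fin d → ℝ)))
    (y : (Fin d → ℝ) → ℝ) :
    ∃ w₁ w₂ : Fin (d + 1) → ℝ,
      (∀ a ∈ A, (∑ j, w₁ j * bar a j) ≤ 0 ∧ (∑ j, w₂ j * bar a j) ≤ 0) ∧
      (∀ b ∈ B, 0 ≤ (∑ j, w₁ j * bar b j) ∧ 0 ≤ (∑ j, w₂ j * bar b j)) ∧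
      (∀ a ∈ A, max (∑ j, w₁ j * bar a j) 0 - max (∑ j, w₂ j * bar a j) 0 = 0) ∧
      (∀ b ∈ B, max (∑ j, w₁ j * bar b j) 0 - max (∑ j, w₂ j * bar b j) 0 = y b) := by
  have hBne : B.Nonempty := Finset.card_pos.mp (by omega)
  set i : Fin d := ⟨d - 1, by omega⟩ with hi
  -- choose a separating level c
  obtain ⟨c, hcA, hcB⟩ : ∃ c : ℝ, (∀ a ∈ A, a i < c) ∧ (∀ b ∈ B, c < b i) := by
    by_cases hAne : A.Nonempty
    · obtain ⟨a₀, ha₀, hMa⟩ := A.exists_mem_eq_sup' hAne (fun a => a i)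
      obtain ⟨b₀, hb₀, hmb⟩ := B.exists_mem_eq_inf' hBne (fun b => b i)
      have hlt : A.sup' hAne (fun a => a i) < B.inf' hBne (fun b => b i) := by
        rw [hMa, hmb]; exact hsep a₀ ha₀ b₀ hb₀
      refine ⟨(A.sup' hAne (fun a => a i) + B.inf' hBne (fun b => b i)) / 2, ?_, ?_⟩
      · intro a ha
        have := Finset.le_sup' (fun a => a i) ha
        linarith
      · intro b hb
        have := Finset.inf'_le (fun b => b i) hb
        linarith
    · refine ⟨B.inf' hBne (fun b => b i) - 1, ?_, ?_⟩
      · intro a ha; exact absurd ⟨a, ha⟩ hAne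
      · intro b hb
        have := Finset.inf'_le (fun b => b i) hb
        linarith
  -- B is affinely independent
  have hAI : AffineIndependent ℝ ((↑) : B → (Fin d → ℝ)) :=
    hgen B (fun x hx => Set.mem_union_right _ hx) (le_of_eq hB)
  -- hence the homogenized points are linearly independent
  have hLI : LinearIndependent ℝ (fun b : B => bar (b : Fin d → ℝ)) := by
    rw [Fintype.linearIndependent_iff]
    intro g hg
    have hg' : ∀ j : Fin (d+1), (∑ b : B, g b • bar (b : Fin d → ℝ)) j = 0 := by
      intro j; rw [hg]; rfl
    have hsum : (∑ b : B, g b) = 0 := by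
      have := hg' (Fin.last d)
      simpa [Finset.sum_apply, bar, Fin.snoc_last] using this
    have hvec : (∑ b ∈ (Finset.univ : Finset B), g b • (b : Fin d → ℝ)) = 0 := by
      funext k
      have := hg' (Fin.castSucc k)
      simpa [Finset.sum_apply, bar, Fin.snoc_castSucc] using this
    intro b
    exact affineIndependent_iff.mp hAI Finset.univ g hsum hvec b (Finset.mem_univ b)
  -- build a basis and the interpolating functional
  have hcard : Fintype.card B = Module.finrank ℝ (Fin (d+1) → ℝ) := by
    simp [Fintype.card_coe, hB]
  haveI : Nonempty B := ⟨⟨hBne.choose, hBne.choose_spec⟩⟩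
  let bB : Module.Basis B ℝ (Fin (d+1) → ℝ) := basisOfLinearIndependentOfCardEqFinrank hLI hcard
  have hbB : ∀ b : B, bB b = bar (b : Fin d → ℝ) := fun b =>
    coe_basisOfLinearIndependentOfCardEqFinrank hLI hcard ▸ rfl
  let φ : (Fin (d+1) → ℝ) →ₗ[ℝ] ℝ := bB.constr ℝ (fun b : B => y (b : Fin d → ℝ))
  have hφ : ∀ b ∈ B, φ (bar b) = y b := by
    intro b hb
    have := bB.constr_basis ℝ (fun b : B => y (b : Fin d → ℝ)) ⟨b, hb⟩
    rwa [hbB ⟨b, hb⟩] at this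
  set w : Fin (d+1) → ℝ := fun j => φ (Pi.single j 1) with hw
  set v : Fin (d+1) → ℝ := Fin.snoc (Pi.single i 1 : Fin d → ℝ) (-c) with hv
  have hvdot : ∀ x : Fin d → ℝ, (∑ j, v j * bar x j) = x i - c := by
    intro x
    rw [hv, snoc_dot, single_dot]; ring
  have hwdot : ∀ x : Fin d → ℝ, (∑ j, w j * bar x j) = φ (bar x) := fun x => lin_dot φ (bar x)
  -- choose the scale t
  set T : Finset ℝ := insert 0 ((A.image (fun a => φ (bar a) / (c - a i))) ∪
      (B.image (fun b => (-(y b)) / (b i - c)))) with hT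
  have hTne : T.Nonempty := ⟨0, Finset.mem_insert_self _ _⟩
  set t : ℝ := T.max' hTne with ht
  have ht0 : 0 ≤ t := Finset.le_max' T 0 (Finset.mem_insert_self _ _)
  have htA : ∀ a ∈ A, φ (bar a) / (c - a i) ≤ t := by
    intro a ha
    exact Finset.le_max' T _ (Finset.mem_insert_of_mem (Finset.mem_union_left _
      (Finset.mem_image_of_mem _ ha)))
  have htB : ∀ b ∈ B, (-(y b)) / (b i - c) ≤ t := by
    intro b hb
    exact Finset.le_max' T _ (Finset.mem_insert_of_mem (Finset.mem_union_right _
      (Finset.mem_image_of_mem _ hb)))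
  refine ⟨w + t • v, t • v, ?_, ?_, ?_, ?_⟩
  all_goals
    have hsum1 : ∀ x : Fin d → ℝ, (∑ j, (w + t • v) j * bar x j) = φ (bar x) + t * (x i - c) := by
      intro x
      have : (∑ j, (w + t • v) j * bar x j)
          = (∑ j, w j * bar x j) + t * (∑ j, v j * bar x j) := by
        rw [Finset.mul_sum, ← Finset.sum_add_distrib]
        congr 1; funext j; simp [Pi.add_apply, Pi.smul_apply]; ring
      rw [this, hwdot, hvdot]
    have hsum2 : ∀ x : Fin d → ℝ, (∑ j, (t • v) j * bar x j) = t * (x i - c) := by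
      intro x
      have : (∑ j, (t • v) j * bar x j) = t * (∑ j, v j * bar x j) := by
        rw [Finset.mul_sum]; congr 1; funext j; simp [Pi.smul_apply]; ring
      rw [this, hvdot]
    have hAineq : ∀ a ∈ A, φ (bar a) + t * (a i - c) ≤ 0 ∧ t * (a i - c) ≤ 0 := by
      intro a ha
      have hc : 0 < c - a i := by have := hcA a ha; linarith
      have h1 : φ (bar a) ≤ t * (c - a i) := by
        have := (div_le_iff₀ hc).mp (htA a ha); linarith
      constructor
      · nlinarith
      · nlinarith
    have hBineq : ∀ b ∈ B, 0 ≤ φ (bar b) + t * (b i - c) ∧ 0 ≤ t * (b i - c) := by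
      intro b hb
      have hc : 0 < b i - c := by have := hcB b hb; linarith
      have h1 : -(y b) ≤ t * (b i - c) := by
        have := (div_le_iff₀ hc).mp (htB b hb); linarith
      rw [hφ b hb]
      constructor
      · linarith
      · nlinarith
  · intro a ha
    rw [hsum1, hsum2]
    exact hAineq a ha
  · intro b hb
    rw [hsum1, hsum2]
    exact hBineq b hb
  · intro a ha
    rw [hsum1, hsum2]
    obtain ⟨h1, h2⟩ := hAineq a ha
    rw [max_eq_right h1, max_eq_right h2]; ring
  · intro b hb
    rw [hsum1, hsum2]
    obtain ⟨h1, h2⟩ := hBineq b hb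
    rw [max_eq_left h1, max_eq_left h2, hφ b hb]; ring
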